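/- arXiv:2503.07438 — 2 statements merged into one kernel-verified Lean document; each statement's English description precedes it below -/
import Mathlib

section
/- Solution membership in a QMI set: given matrices Y ∈ ℝ^{n×T}, Φ ∈ ℝ^{k×T}, Π ∈ ℝ^{(n+T)×(n+T)} symmetric, and θ ∈ ℝ^{k×n}, define W := Y - θᵀΦ and N := [[I_n, Y],[0, -Φ]] Π [[I_n, Y],[0, -Φ]]ᵀ. Then Wᵀ ∈ 𝒵(Π) (i.e., [I_n; Wᵀ]ᵀ Π [I_n; Wᵀ] ⪰ 0) if and only if θ ∈ 𝒵(N) (i.e., [I_n; θ]ᵀ N [I_n; θ] ⪰ 0). -/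
open Matrix

lemma stmt7_key {n T k : ℕ}
    (Y : Matrix (Fin n) (Fin T) ℝ) (Φ : Matrix (Fin k) (Fin T) ℝ)
    (θ : Matrix (Fin k) (Fin n) ℝ) :
    (Matrix.fromBlocks (1 : Matrix (Fin n) (Fin n) ℝ) Y 0 (-Φ))ᵀ *
      Matrix.fromRows (1 : Matrix (Fin n) (Fin n) ℝ) θ =
    Matrix.fromRows (1 : Matrix (Fin n) (Fin n) ℝ) (Y - θᵀ * Φ)ᵀ := by
  ext i j
  cases i <;>
    simp [Matrix.mul_apply, Matrix.fromBlocks, Fintype.sum_sum_type,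
      Matrix.one_apply, Finset.sum_ite_eq, Finset.sum_ite_eq', sub_eq_add_neg,
      Finset.sum_add_distrib, mul_comm, Matrix.fromRows_apply_inl, Matrix.fromRows_apply_inr]

/-- Solution membership in a QMI set: with `W := Y - θᵀΦ` and
`N := [[I, Y],[0, -Φ]] Pm [[I, Y],[0, -Φ]]ᵀ`, we have `Wᵀ ∈ 𝒵(Pm)` iff `θ ∈ 𝒵(N)`. -/
theorem stmt_7 (n T k : ℕ)
    (Y : Matrix (Fin n) (Fin T) ℝ) (Φ : Matrix (Fin k) (Fin T) ℝ)
    (Pm : Matrix (Fin n ⊕ Fin T) (Fin n ⊕ Fin T) ℝ) (hPm : Pm.IsHermitian)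
    (θ : Matrix (Fin k) (Fin n) ℝ) :
    (((Matrix.fromRows (1 : Matrix (Fin n) (Fin n) ℝ) (Y - θᵀ * Φ)ᵀ)ᵀ * Pm *
        Matrix.fromRows (1 : Matrix (Fin n) (Fin n) ℝ) (Y - θᵀ * Φ)ᵀ).PosSemidef) ↔
    (((Matrix.fromRows (1 : Matrix (Fin n) (Fin n) ℝ) θ)ᵀ *
        (Matrix.fromBlocks (1 : Matrix (Fin n) (Fin n) ℝ) Y 0 (-Φ) * Pm *
          (Matrix.fromBlocks (1 : Matrix (Fin n) (Fin n) ℝ) Y 0 (-Φ))ᵀ) *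
        Matrix.fromRows (1 : Matrix (Fin n) (Fin n) ℝ) θ).PosSemidef) := by
  have h : (Matrix.fromRows (1 : Matrix (Fin n) (Fin n) ℝ) θ)ᵀ *
        (Matrix.fromBlocks (1 : Matrix (Fin n) (Fin n) ℝ) Y 0 (-Φ) * Pm *
          (Matrix.fromBlocks (1 : Matrix (Fin n) (Fin n) ℝ) Y 0 (-Φ))ᵀ) *
        Matrix.fromRows (1 : Matrix (Fin n) (Fin n) ℝ) θ =
      (Matrix.fromRows (1 : Matrix (Fin n) (Fin n) ℝ) (Y - θᵀ * Φ)ᵀ)ᵀ * Pm *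
        Matrix.fromRows (1 : Matrix (Fin n) (Fin n) ℝ) (Y - θᵀ * Φ)ᵀ := by
    rw [← stmt7_key Y Φ θ]
    simp only [Matrix.transpose_mul, Matrix.transpose_transpose, Matrix.mul_assoc]
  rw [h]
end

section
/- Boundedness of 𝒵(Π) under negative definite Π₂₂: let Π be symmetric with Π₂₂ ≺ 0 and Π|Π₂₂ ⪰ 0. Then for every Z ∈ 𝒵(Π) and unit vector v ∈ ℝ^n, ‖(Z - Z*)v‖²_{(-Π₂₂)} := vᵀ(Z-Z*)ᵀ(-Π₂₂)(Z-Z*)v ≤ vᵀ(Π|Π₂₂)v ≤ λ_max(Π|Π₂₂), where Z* = -Π₂₂⁻¹Π₂₁. That is, the QMI set 𝒵(Π) is a bounded 'matrix ellipsoid' centered at Z*. -/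
open Matrix

/-- Boundedness of `𝒵(Π)` under `Π₂₂ ≺ 0`: for every `Z ∈ 𝒵(Π)` and unit vector
`v`, `vᵀ(Z-Z*)ᵀ(-Π₂₂)(Z-Z*)v ≤ vᵀ(Π|Π₂₂)v ≤ λ_max(Π|Π₂₂)`, where
`Z* = -Π₂₂⁻¹Π₂₁`. -/
theorem stmt_19 (n T : ℕ)
    (P11 : Matrix (Fin n) (Fin n) ℝ) (P12 : Matrix (Fin n) (Fin T) ℝ)
    (P22 : Matrix (Fin T) (Fin T) ℝ)
    (hsym : (Matrix.fromBlocks P11 P12 P12ᵀ P22).IsHermitian)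
    (h22 : (-P22).PosDef)
    (hschur : (P11 - P12 * P22⁻¹ * P12ᵀ).PosSemidef) :
    ∀ Z : Matrix (Fin T) (Fin n) ℝ,
      ((Matrix.fromRows (1 : Matrix (Fin n) (Fin n) ℝ) Z)ᵀ *
          Matrix.fromBlocks P11 P12 P12ᵀ P22 *
          Matrix.fromRows (1 : Matrix (Fin n) (Fin n) ℝ) Z).PosSemidef →
      ∀ v : Fin n → ℝ, Real.sqrt (v ⬝ᵥ v) = 1 →
        ∀ (hS : (P11 - P12 * P22⁻¹ * P12ᵀ).IsHermitian),
          v ⬝ᵥ (((Z - (-(P22⁻¹ * P12ᵀ)))ᵀ * (-P22) * (Z - (-(P22⁻¹ * P12ᵀ)))) *ᵥ v) ≤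
              v ⬝ᵥ ((P11 - P12 * P22⁻¹ * P12ᵀ) *ᵥ v) ∧
            v ⬝ᵥ ((P11 - P12 * P22⁻¹ * P12ᵀ) *ᵥ v) ≤ ⨆ i, hS.eigenvalues i := by
  intro Z hZ v hv hS
  set S : Matrix (Fin n) (Fin n) ℝ := P11 - P12 * P22⁻¹ * P12ᵀ with hSdef
  -- basic facts about P22
  have h22sym : P22ᵀ = P22 := by
    have h1 : (-P22)ᴴ = -P22 := h22.isHermitian
    rw [Matrix.conjTranspose_eq_transpose_of_trivial, Matrix.transpose_neg] at h1
    exact neg_inj.mp h1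
  have hdet : IsUnit P22.det := by
    have h1 : (-P22).det ≠ 0 := h22.det_pos.ne'
    have h2 : (-P22).det = (-1) ^ T * P22.det := by simp [Matrix.det_neg]
    rw [h2] at h1
    exact isUnit_iff_ne_zero.mpr (right_ne_zero_of_mul h1)
  have hinvT : (P22⁻¹)ᵀ = P22⁻¹ := by
    rw [Matrix.transpose_nonsing_inv, h22sym]
  have hinvmul : P22⁻¹ * P22 = 1 := Matrix.nonsing_inv_mul _ hdet
  have hmulinv : P22 * P22⁻¹ = 1 := Matrix.mul_nonsing_inv _ hdet
  set C : Matrix (Fin T) (Fin n) ℝ := P22⁻¹ * P12ᵀ with hCdef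
  have hCT : Cᵀ = P12 * P22⁻¹ := by
    rw [hCdef, Matrix.transpose_mul, hinvT, Matrix.transpose_transpose]
  have e1 : P22 * C = P12ᵀ := by
    rw [hCdef, ← Matrix.mul_assoc, hmulinv, Matrix.one_mul]
  have e2 : Cᵀ * (P22 * Z) = P12 * Z := by
    rw [← Matrix.mul_assoc, hCT, Matrix.mul_assoc P12, hinvmul, Matrix.mul_one]
  -- the quadratic matrix Q
  have hsub : Z - (-(P22⁻¹ * P12ᵀ)) = Z + C := by rw [sub_neg_eq_add, hCdef]
  have hQ : (Z - (-(P22⁻¹ * P12ᵀ)))ᵀ * (-P22) * (Z - (-(P22⁻¹ * P12ᵀ)))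
      = -(Zᵀ * (P22 * Z)) - Zᵀ * (P22 * C) - Cᵀ * (P22 * Z) - Cᵀ * (P22 * C) := by
    rw [hsub, Matrix.transpose_add]
    simp only [Matrix.add_mul, Matrix.mul_add, Matrix.mul_neg, Matrix.neg_mul,
      Matrix.mul_assoc]
    abel
  rw [e1, e2] at hQ
  -- the matrix M from the QMI
  have hM : (Matrix.fromRows (1 : Matrix (Fin n) (Fin n) ℝ) Z)ᵀ *
        Matrix.fromBlocks P11 P12 P12ᵀ P22 *
        Matrix.fromRows (1 : Matrix (Fin n) (Fin n) ℝ) Z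
      = (P11 + Zᵀ * P12ᵀ) + (P12 * Z + Zᵀ * (P22 * Z)) := by
    rw [Matrix.transpose_fromRows, Matrix.transpose_one, Matrix.fromCols_mul_fromBlocks,
      Matrix.fromCols_mul_fromRows]
    simp [Matrix.add_mul, Matrix.mul_assoc]
  set M : Matrix (Fin n) (Fin n) ℝ := (P11 + Zᵀ * P12ᵀ) + (P12 * Z + Zᵀ * (P22 * Z)) with hMdef
  -- completion of square
  have key : (Z - (-(P22⁻¹ * P12ᵀ)))ᵀ * (-P22) * (Z - (-(P22⁻¹ * P12ᵀ))) = S - M := by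
    rw [hQ, hSdef, hMdef, hCT, Matrix.mul_assoc P12]
    abel
  -- first inequality
  have hMpsd : M.PosSemidef := hM ▸ hZ
  have first : v ⬝ᵥ (((Z - (-(P22⁻¹ * P12ᵀ)))ᵀ * (-P22) * (Z - (-(P22⁻¹ * P12ᵀ)))) *ᵥ v)
      ≤ v ⬝ᵥ (S *ᵥ v) := by
    rw [key, Matrix.sub_mulVec, dotProduct_sub]
    have h0 : (0 : ℝ) ≤ v ⬝ᵥ (M *ᵥ v) := by simpa using hMpsd.dotProduct_mulVec_nonneg v
    linarith
  refine ⟨first, ?_⟩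
  -- second inequality: Rayleigh bound
  have hvv : v ⬝ᵥ v = 1 := by
    have h0 : 0 ≤ v ⬝ᵥ v := Finset.sum_nonneg fun i _ => mul_self_nonneg _
    nlinarith [Real.sq_sqrt h0, hv]
  have hne : Nonempty (Fin n) := by
    rcases Nat.eq_zero_or_pos n with h | h
    · subst h; simp [dotProduct] at hvv
    · exact ⟨⟨0, h⟩⟩
  set U : Matrix (Fin n) (Fin n) ℝ := (hS.eigenvectorUnitary : Matrix (Fin n) (Fin n) ℝ) with hU
  have hspec : S = U * Matrix.diagonal hS.eigenvalues * star U := by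
    have := hS.spectral_theorem
    simpa [Function.comp] using this
  have hUU : U * star U = 1 := Matrix.mem_unitaryGroup_iff.mp hS.eigenvectorUnitary.2
  have hstarU : star U = Uᵀ := by
    rw [Matrix.star_eq_conjTranspose, Matrix.conjTranspose_eq_transpose_of_trivial]
  have hvSv : v ⬝ᵥ (S *ᵥ v)
      = ∑ i, hS.eigenvalues i * ((Uᵀ *ᵥ v) i) ^ 2 := by
    conv_lhs => rw [hspec, ← Matrix.mulVec_mulVec, ← Matrix.mulVec_mulVec,
      Matrix.dotProduct_mulVec, ← Matrix.mulVec_transpose, hstarU]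
    simp only [dotProduct, Matrix.mulVec_diagonal]
    exact Finset.sum_congr rfl fun i _ => by ring
  have hww : (Uᵀ *ᵥ v) ⬝ᵥ (Uᵀ *ᵥ v) = 1 := by
    calc (Uᵀ *ᵥ v) ⬝ᵥ (Uᵀ *ᵥ v) = (v ᵥ* U) ⬝ᵥ (Uᵀ *ᵥ v) := by
          rw [Matrix.mulVec_transpose]
      _ = ((v ᵥ* U) ᵥ* Uᵀ) ⬝ᵥ v := by rw [Matrix.dotProduct_mulVec]
      _ = (v ᵥ* (U * Uᵀ)) ⬝ᵥ v := by rw [Matrix.vecMul_vecMul]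
      _ = v ⬝ᵥ v := by rw [← hstarU, hUU, Matrix.vecMul_one]
      _ = 1 := hvv
  have hbdd : BddAbove (Set.range hS.eigenvalues) := Set.Finite.bddAbove (Set.finite_range _)
  calc v ⬝ᵥ (S *ᵥ v) = ∑ i, hS.eigenvalues i * ((Uᵀ *ᵥ v) i) ^ 2 := hvSv
    _ ≤ ∑ i, (⨆ j, hS.eigenvalues j) * ((Uᵀ *ᵥ v) i) ^ 2 := by
        refine Finset.sum_le_sum fun i _ => ?_
        exact mul_le_mul_of_nonneg_right (le_ciSup hbdd i) (sq_nonneg _)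
    _ = (⨆ j, hS.eigenvalues j) * ((Uᵀ *ᵥ v) ⬝ᵥ (Uᵀ *ᵥ v)) := by
        rw [← Finset.mul_sum]
        simp [dotProduct, sq]
    _ = ⨆ j, hS.eigenvalues j := by rw [hww, mul_one]
end
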